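/- Let J_c ~ Poisson(c^{−2}) and consider the critical Poisson-shift experiment (law(J_c), law(1 + J_c)) and the Gaussian shift experiment (N(0,1), N(c,1)). For every fixed ε ≥ 0 there exists a finite constant C_ε such that for all sufficiently small c > 0, |δ_{law(1+J_c) ‖ law(J_c)}(ε) − δ_{N(c,1) ‖ N(0,1)}(ε)| ≤ C_ε · c. -/

import Mathlib

open MeasureTheory ProbabilityTheory

/-- The privacy curve of the binary experiment `(P,Q)`:
`δ_{Q‖P}(ε) = sup_{A measurable} (Q(A) − e^ε P(A))`. -/
noncomputable def privCurve {X : Type*} [MeasurableSpace X] (P Q : Measure X) (ε : ℝ) : ℝ :=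
  ⨆ A : {A : Set X // MeasurableSet A}, ((Q A.1).toReal - Real.exp ε * (P A.1).toReal)

/-- The Poisson distribution on `ℕ` with mean `r ≥ 0`. -/
noncomputable def poissonMeasure (r : ℝ) : Measure ℕ :=
  Measure.sum fun k : ℕ =>
    (ENNReal.ofReal (Real.exp (-r) * r ^ k / (Nat.factorial k))) • Measure.dirac k

open scoped ENNReal NNReal

noncomputable def pw (r : ℝ) (k : ℕ) : ℝ := Real.exp (-r) * r ^ k / (Nat.factorial k)

lemma pw_nonneg {r : ℝ} (hr : 0 ≤ r) (k : ℕ) : 0 ≤ pw r k := by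
  unfold pw; positivity

lemma summable_pw (r : ℝ) : Summable (pw r) := by
  have := (Real.summable_pow_div_factorial r).mul_left (Real.exp (-r))
  exact this.congr fun k => by simp [pw, mul_div_assoc]

lemma tsum_pw {r : ℝ} : ∑' k, pw r k = 1 := by
  have h1 : ∑' k : ℕ, r ^ k / (Nat.factorial k) = Real.exp r := by
    rw [Real.exp_eq_exp_ℝ, NormedSpace.exp_eq_tsum_div]
  calc ∑' k, pw r k = Real.exp (-r) * ∑' k : ℕ, r ^ k / (Nat.factorial k) := by
        rw [← tsum_mul_left]; simp [pw, mul_div_assoc]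
    _ = 1 := by rw [h1, ← Real.exp_add]; simp

lemma poissonMeasure_apply {r : ℝ} (hr : 0 ≤ r) (A : Set ℕ) :
    _root_.poissonMeasure r A = ENNReal.ofReal (∑' k, A.indicator (pw r) k) := by
  have hA : MeasurableSet A := MeasurableSet.of_discrete
  rw [_root_.poissonMeasure, Measure.sum_apply _ hA]
  rw [ENNReal.ofReal_tsum_of_nonneg (fun k => Set.indicator_nonneg (fun i _ => pw_nonneg hr i) k)
    ((summable_pw r).indicator A)]
  refine tsum_congr fun k => ?_
  rw [Measure.smul_apply, Measure.dirac_apply' _ hA]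
  by_cases hk : k ∈ A <;> simp [hk, Set.indicator_of_mem, Set.indicator_of_notMem, pw]

lemma poissonMeasure_ne_top {r : ℝ} (hr : 0 ≤ r) (A : Set ℕ) : _root_.poissonMeasure r A ≠ ⊤ := by
  rw [poissonMeasure_apply hr]; exact ENNReal.ofReal_ne_top

lemma poissonMeasure_toReal {r : ℝ} (hr : 0 ≤ r) (A : Set ℕ) :
    (_root_.poissonMeasure r A).toReal = ∑' k, A.indicator (pw r) k := by
  rw [poissonMeasure_apply hr, ENNReal.toReal_ofReal]
  exact tsum_nonneg fun k => Set.indicator_nonneg (fun i _ => pw_nonneg hr i) k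

lemma pw_succ (r : ℝ) (k : ℕ) : pw r (k + 1) = pw r k * (r / (k + 1)) := by
  have h1 : ((Nat.factorial k : ℝ)) ≠ 0 := Nat.cast_ne_zero.mpr (Nat.factorial_ne_zero k)
  have h2 : ((k : ℝ) + 1) ≠ 0 := by positivity
  unfold pw
  rw [Nat.factorial_succ]
  push_cast
  field_simp
  ring

lemma pw_mono_le {r : ℝ} {k : ℕ} (hk : (k : ℝ) + 1 ≤ r) (hr : 0 ≤ r) :
    pw r k ≤ pw r (k + 1) := by
  rw [pw_succ]
  have h2 : (0:ℝ) < (k:ℝ) + 1 := by positivity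
  exact le_mul_of_one_le_right (pw_nonneg hr k) ((one_le_div h2).mpr hk)

lemma pw_anti {r : ℝ} {k : ℕ} (hk : r ≤ (k : ℝ) + 1) (hr : 0 ≤ r) :
    pw r (k + 1) ≤ pw r k := by
  rw [pw_succ]
  have h2 : (0:ℝ) < (k:ℝ) + 1 := by positivity
  have : r / ((k:ℝ)+1) ≤ 1 := (div_le_one h2).mpr hk
  nlinarith [pw_nonneg hr k]

lemma tsum_telescope {f : ℕ → ℝ} (hf : Summable f) : ∑' j, (f j - f (j + 1)) = f 0 := by
  have h1 : Summable fun j => f (j + 1) := (summable_nat_add_iff 1).mpr hf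
  rw [Summable.tsum_sub hf h1, Summable.tsum_eq_zero_add hf]
  ring

lemma summable_g {r : ℝ} (hr : 0 ≤ r) : Summable fun k => max (pw r k - pw r (k + 1)) 0 := by
  refine Summable.of_nonneg_of_le (fun k => le_max_right _ _) (fun k => ?_) (summable_pw r)
  exact max_le (by linarith [pw_nonneg hr (k+1)]) (pw_nonneg hr k)

lemma tsum_g {r : ℝ} (hr : 0 ≤ r) :
    ∑' k, max (pw r k - pw r (k + 1)) 0 = pw r (Nat.floor r) := by
  set m := Nat.floor r with hm
  rw [← Summable.sum_add_tsum_nat_add m (summable_g hr)]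
  have h1 : ∑ i ∈ Finset.range m, max (pw r i - pw r (i + 1)) 0 = 0 := by
    refine Finset.sum_eq_zero fun i hi => ?_
    have hi' : i < m := Finset.mem_range.mp hi
    have : (i : ℝ) + 1 ≤ r := by
      have : (i + 1 : ℕ) ≤ m := hi'
      calc ((i : ℝ) + 1) = ((i + 1 : ℕ) : ℝ) := by push_cast; ring
        _ ≤ (m : ℝ) := by exact_mod_cast this
        _ ≤ r := Nat.floor_le hr
    simp [max_eq_right, sub_nonpos.mpr (pw_mono_le this hr)]
  have h2 : ∀ i : ℕ, max (pw r (i + m) - pw r (i + m + 1)) 0 = pw r (i + m) - pw r (i + m + 1) := by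
    intro i
    refine max_eq_left (sub_nonneg.mpr (pw_anti ?_ hr))
    have h4 := Nat.lt_floor_add_one r
    push_cast
    have : (0:ℝ) ≤ (i:ℝ) := Nat.cast_nonneg i
    linarith
  rw [h1, zero_add]
  have h3 : Summable fun i => pw r (i + m) := (summable_nat_add_iff m).mpr (summable_pw r)
  calc ∑' i, max (pw r (i + m) - pw r (i + m + 1)) 0
      = ∑' i, ((fun j => pw r (j + m)) i - (fun j => pw r (j + m)) (i + 1)) := by
        refine tsum_congr fun i => ?_
        rw [h2 i]
        have h5 : i + m + 1 = i + 1 + m := by omega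
        rw [h5]
    _ = pw r (0 + m) := tsum_telescope h3
    _ = pw r m := by rw [zero_add]

lemma key_real {r : ℝ} (hr : 0 ≤ r) (A : Set ℕ) :
    ∑' k, Set.indicator ((fun k => k + 1) ⁻¹' A) (pw r) k
      ≤ (∑' k, A.indicator (pw r) k) + pw r (Nat.floor r) := by
  set b : ℕ → ℝ := A.indicator (pw r) with hb
  set g : ℕ → ℝ := fun k => max (pw r k - pw r (k + 1)) 0 with hg
  have hsumb : Summable b := (summable_pw r).indicator A
  have hsumb' : Summable fun k => b (k + 1) := (summable_nat_add_iff 1).mpr hsumb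
  have hbnn : ∀ k, 0 ≤ b k := fun k => Set.indicator_nonneg (fun i _ => pw_nonneg hr i) k
  have hstep : ∀ k, Set.indicator ((fun k => k + 1) ⁻¹' A) (pw r) k ≤ b (k + 1) + g k := by
    intro k
    by_cases hk : k + 1 ∈ A
    · rw [Set.indicator_of_mem (by exact hk), hb, Set.indicator_of_mem hk]
      have : pw r k - pw r (k + 1) ≤ g k := le_max_left _ _
      linarith
    · rw [Set.indicator_of_notMem (by exact hk)]
      have := hbnn (k + 1)
      have : (0:ℝ) ≤ g k := le_max_right _ _
      linarith [hbnn (k + 1)]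
  calc ∑' k, Set.indicator ((fun k => k + 1) ⁻¹' A) (pw r) k
      ≤ ∑' k, (b (k + 1) + g k) := by
        refine Summable.tsum_le_tsum hstep ?_ (hsumb'.add (summable_g hr))
        exact ((summable_pw r).indicator _)
    _ = (∑' k, b (k + 1)) + ∑' k, g k := Summable.tsum_add hsumb' (summable_g hr)
    _ ≤ (∑' k, b k) + ∑' k, g k := by
        have h0 : ∑' k, b k = b 0 + ∑' k, b (k + 1) := Summable.tsum_eq_zero_add hsumb
        have := hbnn 0
        linarith
    _ = (∑' k, b k) + pw r (Nat.floor r) := by rw [tsum_g hr]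

lemma key_measure {r : ℝ} (hr : 0 ≤ r) (A : Set ℕ) :
    ((_root_.poissonMeasure r).map (fun k => k + 1) A).toReal
      ≤ (_root_.poissonMeasure r A).toReal + pw r (Nat.floor r) := by
  have hA : MeasurableSet A := MeasurableSet.of_discrete
  rw [Measure.map_apply Measurable.of_discrete hA, poissonMeasure_toReal hr,
    poissonMeasure_toReal hr]
  exact key_real hr A

lemma pw_floor_le {s : ℝ} (hs : 1 ≤ s) :
    pw (s ^ 2) (Nat.floor (s ^ 2)) ≤ Real.exp 1 / s := by
  have hs0 : (0:ℝ) < s := by linarith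
  set r : ℝ := s ^ 2 with hrdef
  have hr : (0:ℝ) ≤ r := by positivity
  set m : ℕ := Nat.floor r with hmdef
  set J : ℕ := Nat.floor s with hJdef
  have hJs : (J : ℝ) ≤ s := Nat.floor_le hs0.le
  have hsJ1 : s < (J : ℝ) + 1 := Nat.lt_floor_add_one s
  have hmr : (m : ℝ) ≤ r := Nat.floor_le hr
  set q : ℝ := s / (s + 1) with hqdef
  have hq0 : 0 < q := by positivity
  have hq1 : q ≤ 1 := by rw [hqdef, div_le_one (by linarith)]; linarith
  -- step A
  have hA : ∀ j : ℕ, j ≤ J → pw r m * q ^ j ≤ pw r (m + j) := by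
    intro j
    induction j with
    | zero => intro _; simp
    | succ j ih =>
      intro hj1
      have hj : j ≤ J := by omega
      have hIH := ih hj
      have hjs : (j : ℝ) + 1 ≤ s := by
        have : ((j+1 : ℕ) : ℝ) ≤ (J : ℝ) := by exact_mod_cast hj1
        push_cast at this; linarith
      have hfrac : q ≤ r / ((m + j : ℕ) + 1 : ℝ) := by
        rw [hqdef, div_le_div_iff₀ (by linarith) (by positivity)]
        have hcast : ((m + j : ℕ) : ℝ) = (m : ℝ) + j := by push_cast; ring
        have hj0 : (0:ℝ) ≤ (j:ℝ) := Nat.cast_nonneg j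
        nlinarith [hmr]
      calc pw r m * q ^ (j + 1) = (pw r m * q ^ j) * q := by ring
        _ ≤ pw r (m + j) * (r / ((m + j : ℕ) + 1 : ℝ)) := by
            exact mul_le_mul hIH hfrac hq0.le (pw_nonneg hr _)
        _ = pw r (m + (j + 1)) := by rw [← pw_succ]; norm_num [Nat.add_assoc]
  -- step B
  have hB : Real.exp (-1) ≤ q ^ J := by
    have h1 : ((s + 1) / s) ^ J ≤ Real.exp 1 := by
      have h2 : (s + 1) / s ≤ Real.exp (1 / s) := by
        have h3 := Real.add_one_le_exp (1 / s)
        have h4 : (s + 1) / s = 1 / s + 1 := by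
          rw [add_div, div_self hs0.ne', add_comm]
        linarith [h4.le, h4.ge]
      calc ((s + 1) / s) ^ J ≤ Real.exp (1 / s) ^ J := by
            refine pow_le_pow_left₀ (by positivity) h2 J
        _ = Real.exp ((J : ℝ) * (1 / s)) := by rw [← Real.exp_nat_mul]
        _ ≤ Real.exp 1 := by
            refine Real.exp_le_exp.mpr ?_
            rw [mul_one_div, div_le_one hs0]
            exact hJs
    have hq' : q ^ J = (((s + 1) / s) ^ J)⁻¹ := by
      rw [hqdef, ← inv_pow]
      congr 1
      rw [inv_div]
    rw [Real.exp_neg, hq']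
    exact inv_anti₀ (by positivity) h1
  -- step C : sum bound
  have hC : ((J : ℝ) + 1) * (pw r m * Real.exp (-1)) ≤ 1 := by
    have hsum : ∑ j ∈ Finset.range (J + 1), pw r (j + m) ≤ 1 := by
      have h5 : Summable fun i => pw r (i + m) := (summable_nat_add_iff m).mpr (summable_pw r)
      have h6 : ∑ j ∈ Finset.range (J + 1), pw r (j + m) ≤ ∑' i, pw r (i + m) :=
        Summable.sum_le_tsum _ (fun i _ => pw_nonneg hr _) h5
      have h7 : ∑' i, pw r (i + m) ≤ ∑' i, pw r i := by
        rw [← Summable.sum_add_tsum_nat_add m (summable_pw r)]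
        have : (0:ℝ) ≤ ∑ i ∈ Finset.range m, pw r i :=
          Finset.sum_nonneg fun i _ => pw_nonneg hr i
        linarith
      rw [tsum_pw] at h7
      linarith
    have hterm : ∀ j ∈ Finset.range (J + 1), pw r m * Real.exp (-1) ≤ pw r (j + m) := by
      intro j hj
      have hj' : j ≤ J := by simpa [Nat.lt_succ_iff] using Finset.mem_range.mp hj
      have h8 : q ^ J ≤ q ^ j := pow_le_pow_of_le_one hq0.le hq1 hj'
      calc pw r m * Real.exp (-1) ≤ pw r m * q ^ J := by
            exact mul_le_mul_of_nonneg_left hB (pw_nonneg hr m)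
        _ ≤ pw r m * q ^ j := mul_le_mul_of_nonneg_left h8 (pw_nonneg hr m)
        _ ≤ pw r (m + j) := hA j hj'
        _ = pw r (j + m) := by rw [add_comm]
    calc ((J : ℝ) + 1) * (pw r m * Real.exp (-1))
        = ∑ _j ∈ Finset.range (J + 1), pw r m * Real.exp (-1) := by
          rw [Finset.sum_const, Finset.card_range]; push_cast; ring
      _ ≤ ∑ j ∈ Finset.range (J + 1), pw r (j + m) := Finset.sum_le_sum hterm
      _ ≤ 1 := hsum
  -- conclude
  have hpwm : 0 ≤ pw r m := pw_nonneg hr m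
  have hexp : (0:ℝ) < Real.exp (-1) := Real.exp_pos _
  have h9 : pw r m * s ≤ Real.exp 1 := by
    have h10 : pw r m * ((J : ℝ) + 1) ≤ Real.exp 1 := by
      have := hC
      rw [Real.exp_neg] at this
      have hepos : (0:ℝ) < Real.exp 1 := Real.exp_pos 1
      calc pw r m * ((J : ℝ) + 1)
          = (((J : ℝ) + 1) * (pw r m * (Real.exp 1)⁻¹)) * Real.exp 1 := by
            field_simp
        _ ≤ 1 * Real.exp 1 := by exact mul_le_mul_of_nonneg_right this hepos.le
        _ = Real.exp 1 := one_mul _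
    nlinarith
  rw [le_div_iff₀ hs0]
  exact h9

lemma gaussianPDFReal_le_one (μ : ℝ) (x : ℝ) : gaussianPDFReal μ 1 x ≤ 1 := by
  rw [gaussianPDFReal]
  have h1 : Real.exp (-(x - μ) ^ 2 / (2 * ((1:ℝ≥0):ℝ))) ≤ 1 := by
    rw [← Real.exp_zero]
    refine Real.exp_le_exp.mpr ?_
    push_cast
    nlinarith [sq_nonneg (x - μ)]
  have h2 : (Real.sqrt (2 * Real.pi * ((1:ℝ≥0):ℝ)))⁻¹ ≤ 1 := by
    rw [inv_le_one_iff₀]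
    right
    rw [show ((2:ℝ) * Real.pi * ((1:ℝ≥0):ℝ)) = 2 * Real.pi by push_cast; ring]
    refine Real.one_le_sqrt.mpr ?_
    nlinarith [Real.pi_gt_three]
  calc (Real.sqrt (2 * Real.pi * ((1:ℝ≥0):ℝ)))⁻¹ * Real.exp (-(x - μ) ^ 2 / (2 * ((1:ℝ≥0):ℝ)))
      ≤ 1 * 1 := by
        refine mul_le_mul h2 h1 (Real.exp_nonneg _) zero_le_one
    _ = 1 := one_mul 1

lemma gaussianPDF_mono {c x : ℝ} (hc : 0 < c) (hx : x ≤ c / 2) :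
    gaussianPDF c 1 x ≤ gaussianPDF 0 1 x := by
  refine ENNReal.ofReal_le_ofReal ?_
  rw [gaussianPDFReal, gaussianPDFReal]
  refine mul_le_mul_of_nonneg_left ?_ (by positivity)
  refine Real.exp_le_exp.mpr ?_
  have : ((1:ℝ≥0):ℝ) = 1 := rfl
  rw [this]
  nlinarith

lemma gaussianPDF_mono' {c x : ℝ} (hc : 0 < c) (hx : c / 2 ≤ x) :
    gaussianPDF 0 1 x ≤ gaussianPDF c 1 x := by
  refine ENNReal.ofReal_le_ofReal ?_
  rw [gaussianPDFReal, gaussianPDFReal]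
  refine mul_le_mul_of_nonneg_left ?_ (by positivity)
  refine Real.exp_le_exp.mpr ?_
  have : ((1:ℝ≥0):ℝ) = 1 := rfl
  rw [this]
  nlinarith

lemma gauss_key {c : ℝ} (hc0 : 0 < c) (A : Set ℝ) (hA : MeasurableSet A) :
    (gaussianReal c 1 A).toReal ≤ (gaussianReal 0 1 A).toReal + c := by
  set P := gaussianReal 0 1 with hP
  set Q := gaussianReal c 1 with hQ
  set S : Set ℝ := Set.Ioi (c / 2) with hS
  have hSm : MeasurableSet S := measurableSet_Ioi
  have hone : (1 : ℝ≥0) ≠ 0 := one_ne_zero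
  -- comparison on subsets of Sᶜ and S
  have hQleP : ∀ B : Set ℝ, MeasurableSet B → B ⊆ Set.Iic (c / 2) → Q B ≤ P B := by
    intro B hB hBsub
    rw [hQ, hP, gaussianReal_apply _ hone, gaussianReal_apply _ hone]
    refine setLIntegral_mono (measurable_gaussianPDF 0 1) fun x hx => ?_
    exact gaussianPDF_mono hc0 (hBsub hx)
  have hPleQ : ∀ B : Set ℝ, MeasurableSet B → B ⊆ Set.Ici (c / 2) → P B ≤ Q B := by
    intro B hB hBsub
    rw [hQ, hP, gaussianReal_apply _ hone, gaussianReal_apply _ hone]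
    refine setLIntegral_mono (measurable_gaussianPDF c 1) fun x hx => ?_
    exact gaussianPDF_mono' hc0 (hBsub hx)
  -- main ENNReal inequality
  have hmain : Q A + P S ≤ P A + Q S := by
    have hdA : Q (A ∩ S) + Q (A \ S) = Q A := measure_inter_add_diff A hSm
    have hdA' : P (A ∩ S) + P (A \ S) = P A := measure_inter_add_diff A hSm
    have hdS : Q (S ∩ A) + Q (S \ A) = Q S := measure_inter_add_diff S hA
    have hdS' : P (S ∩ A) + P (S \ A) = P S := measure_inter_add_diff S hA
    have h1 : Q (A \ S) ≤ P (A \ S) := by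
      refine hQleP _ (hA.diff hSm) fun x hx => ?_
      have := hx.2
      simp only [hS, Set.mem_Ioi, not_lt] at this
      exact this
    have h2 : P (S \ A) ≤ Q (S \ A) := by
      refine hPleQ _ (hSm.diff hA) fun x hx => ?_
      exact le_of_lt (show c / 2 < x from hx.1)
    calc Q A + P S = Q (A ∩ S) + Q (A \ S) + (P (S ∩ A) + P (S \ A)) := by
          rw [hdA, hdS']
      _ ≤ Q (A ∩ S) + P (A \ S) + (P (S ∩ A) + Q (S \ A)) := by
          exact add_le_add (add_le_add le_rfl h1) (add_le_add le_rfl h2)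
      _ = P (A ∩ S) + P (A \ S) + (Q (S ∩ A) + Q (S \ A)) := by
          rw [Set.inter_comm A S]
          ring
      _ = P A + Q S := by rw [hdA', hdS]
  -- compute Q S
  have hQS : Q S = P (Set.Ioi (-(c / 2))) := by
    have hmap : Q = P.map (· + c) := by
      rw [hQ, hP, gaussianReal_map_add_const c, zero_add]
    rw [hmap, Measure.map_apply (measurable_add_const c) hSm]
    congr 1
    ext x
    simp only [Set.mem_preimage, hS, Set.mem_Ioi]
    constructor <;> intro h <;> linarith
  -- split Ioi(-c/2)
  have hsplit : P (Set.Ioi (-(c / 2))) = P (Set.Ioc (-(c / 2)) (c / 2)) + P S := by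
    rw [hS, ← Set.Ioc_union_Ioi_eq_Ioi (by linarith : -(c/2) ≤ c/2)]
    rw [measure_union _ measurableSet_Ioi]
    exact Set.Ioc_disjoint_Ioi le_rfl
  -- bound the middle interval
  have hIoc : P (Set.Ioc (-(c / 2)) (c / 2)) ≤ ENNReal.ofReal c := by
    rw [hP, gaussianReal_apply _ hone]
    calc ∫⁻ x in Set.Ioc (-(c/2)) (c/2), gaussianPDF 0 1 x
        ≤ ∫⁻ _x in Set.Ioc (-(c/2)) (c/2), 1 := by
          refine setLIntegral_mono measurable_const fun x _ => ?_
          rw [gaussianPDF]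
          calc ENNReal.ofReal (gaussianPDFReal 0 1 x) ≤ ENNReal.ofReal 1 :=
                ENNReal.ofReal_le_ofReal (gaussianPDFReal_le_one 0 x)
            _ = 1 := ENNReal.ofReal_one
      _ = volume (Set.Ioc (-(c/2)) (c/2)) := setLIntegral_one _
      _ = ENNReal.ofReal c := by rw [Real.volume_Ioc]; congr 1; ring
  -- put together in ℝ
  have hfin : ∀ (μ : Measure ℝ) [IsProbabilityMeasure μ] (B : Set ℝ), μ B ≠ ⊤ :=
    fun μ _ B => measure_ne_top μ B
  have hPA := hfin P A; have hQA := hfin Q A; have hPS := hfin P S; have hQS' := hfin Q S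
  have hmain' : (Q A).toReal + (P S).toReal ≤ (P A).toReal + (Q S).toReal := by
    rw [← ENNReal.toReal_add hQA hPS, ← ENNReal.toReal_add hPA hQS']
    exact ENNReal.toReal_mono (by finiteness) hmain
  have hQSr : (Q S).toReal ≤ (P S).toReal + c := by
    have h5 : (Q S).toReal = (P (Set.Ioc (-(c / 2)) (c / 2))).toReal + (P S).toReal := by
      rw [hQS, hsplit, ENNReal.toReal_add (hfin P _) hPS]
    have h6 : (P (Set.Ioc (-(c / 2)) (c / 2))).toReal ≤ c := by
      calc (P (Set.Ioc (-(c / 2)) (c / 2))).toReal ≤ (ENNReal.ofReal c).toReal :=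
            ENNReal.toReal_mono ENNReal.ofReal_ne_top hIoc
        _ = c := ENNReal.toReal_ofReal hc0.le
    linarith
  linarith

lemma privCurve_bounds {X : Type*} [MeasurableSpace X] (P Q : Measure X) {ε D : ℝ}
    (hε : 0 ≤ ε) (hD : 0 ≤ D)
    (h : ∀ A : Set X, MeasurableSet A → (Q A).toReal ≤ (P A).toReal + D) :
    0 ≤ privCurve P Q ε ∧ privCurve P Q ε ≤ D := by
  haveI : Nonempty {A : Set X // MeasurableSet A} := ⟨⟨∅, MeasurableSet.empty⟩⟩
  have hub : ∀ A : {A : Set X // MeasurableSet A},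
      (Q A.1).toReal - Real.exp ε * (P A.1).toReal ≤ D := by
    intro A
    have h1 := h A.1 A.2
    have h2 : 1 ≤ Real.exp ε := Real.one_le_exp hε
    nlinarith [ENNReal.toReal_nonneg (a := P A.1)]
  constructor
  · have hle : ((Q (∅ : Set X)).toReal - Real.exp ε * (P (∅ : Set X)).toReal) ≤ privCurve P Q ε :=
      le_ciSup (f := fun A : {A : Set X // MeasurableSet A} =>
          ((Q A.1).toReal - Real.exp ε * (P A.1).toReal))
        ⟨D, by rintro x ⟨A, rfl⟩; exact hub A⟩ ⟨∅, MeasurableSet.empty⟩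
    simpa using hle
  · exact ciSup_le hub

/-- Boundary privacy-curve convergence (Corollary 8.2): the privacy curve of the
critical Poisson-shift experiment `(Poi(c^{−2}), 1 + Poi(c^{−2}))` is within
`C_ε · c` of the privacy curve of the Gaussian shift experiment `(N(0,1), N(c,1))`,
for all sufficiently small `c > 0`. -/
theorem boundary_privacy_curve_convergence (ε : ℝ) (hε : 0 ≤ ε) :
    ∃ Cε : ℝ, ∃ c₀ : ℝ, 0 < c₀ ∧ ∀ c ∈ Set.Ioc (0 : ℝ) c₀,
      |privCurve (poissonMeasure (c ^ (-2 : ℤ)))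
          (Measure.map (fun k => k + 1) (poissonMeasure (c ^ (-2 : ℤ)))) ε -
        privCurve (gaussianReal 0 1) (gaussianReal c 1) ε| ≤ Cε * c := by
  refine ⟨Real.exp 1 + 1, 1, one_pos, fun c hc => ?_⟩
  obtain ⟨hc0, hc1⟩ := hc
  have hr2 : c ^ (-2 : ℤ) = (1 / c) ^ 2 := by
    rw [zpow_neg, div_pow, one_pow, one_div]
    norm_cast
  have hs : 1 ≤ 1 / c := (le_div_iff₀ hc0).mpr (by linarith)
  have hr0 : (0:ℝ) ≤ c ^ (-2 : ℤ) := by rw [hr2]; positivity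
  have hpwle : pw (c ^ (-2 : ℤ)) (Nat.floor (c ^ (-2 : ℤ))) ≤ Real.exp 1 * c := by
    rw [hr2]
    calc pw ((1/c) ^ 2) (Nat.floor ((1/c) ^ 2)) ≤ Real.exp 1 / (1 / c) := pw_floor_le hs
      _ = Real.exp 1 * c := by
          rw [div_div_eq_mul_div, div_one]
  have hPois : ∀ A : Set ℕ, MeasurableSet A →
      ((Measure.map (fun k => k + 1) (_root_.poissonMeasure (c ^ (-2 : ℤ)))) A).toReal
        ≤ ((_root_.poissonMeasure (c ^ (-2 : ℤ))) A).toReal + Real.exp 1 * c := by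
    intro A _
    have h1 := key_measure hr0 A
    linarith
  have hGauss : ∀ A : Set ℝ, MeasurableSet A →
      ((gaussianReal c 1) A).toReal ≤ ((gaussianReal 0 1) A).toReal + c :=
    fun A hA => gauss_key hc0 A hA
  obtain ⟨hp0, hpD⟩ := privCurve_bounds _ _ hε (by positivity) hPois
  obtain ⟨hg0, hgD⟩ := privCurve_bounds _ _ hε hc0.le hGauss
  have he1 : (1:ℝ) ≤ Real.exp 1 := Real.one_le_exp zero_le_one
  rw [abs_le]
  constructor <;> nlinarith
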